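/- Let θ : ℝⁿ → ℝ be convex and continuous, X ⊆ ℝⁿ nonempty closed convex, A ∈ ℝ^{m×n}, b ∈ ℝᵐ, and let H ∈ ℝ^{(n+m)×(n+m)}. Let {wᵏ} and {w̄ᵏ} = {(x̄ᵏ, λ̄ᵏ)} be sequences with w̄ᵏ ∈ X × ℝᵐ such that for every k and every w = (x,λ) ∈ X × ℝᵐ, θ(x) − θ(x̄ᵏ) + (w − w̄ᵏ)ᵀF(w̄ᵏ) ≥ (w − w̄ᵏ)ᵀH(wᵏ − w̄ᵏ), and suppose wᵏ − w̄ᵏ → 0. If a subsequence {w̄^{k_j}} converges to w^∞, then w^∞ ∈ X × ℝᵐ and θ(x) − θ(x^∞) + (w − w^∞)ᵀF(w^∞) ≥ 0 for all w ∈ X × ℝᵐ, i.e. w^∞ ∈ Ω*. -/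

import Mathlib

open Matrix Set Filter

/-- If the prediction inequality
`θ x - θ x̄ᵏ + (w - w̄ᵏ)ᵀ F(w̄ᵏ) ≥ (w - w̄ᵏ)ᵀ H (wᵏ - w̄ᵏ)` holds for all `k` and all
`w ∈ X × ℝᵐ`, `wᵏ - w̄ᵏ → 0`, and a subsequence `w̄^{k_j} → w^∞`, then `w^∞ ∈ X × ℝᵐ` and
`θ x - θ x^∞ + (w - w^∞)ᵀ F(w^∞) ≥ 0` for all `w ∈ X × ℝᵐ`, i.e. `w^∞ ∈ Ω*`. -/
theorem stmt_11 {n m : ℕ} (θ : (Fin n → ℝ) → ℝ) (hθ : ConvexOn ℝ Set.univ θ)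
    (hθc : Continuous θ)
    (X : Set (Fin n → ℝ)) (hXne : X.Nonempty) (hXclosed : IsClosed X) (hXconv : Convex ℝ X)
    (A : Matrix (Fin m) (Fin n) ℝ) (b : Fin m → ℝ)
    (H : Matrix (Fin n ⊕ Fin m) (Fin n ⊕ Fin m) ℝ)
    (w : ℕ → Fin n ⊕ Fin m → ℝ) (xbar : ℕ → Fin n → ℝ) (lbar : ℕ → Fin m → ℝ)
    (hbarX : ∀ k, xbar k ∈ X)
    (hpred : ∀ k : ℕ, ∀ x ∈ X, ∀ lam : Fin m → ℝ,
      θ x - θ (xbar k) +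
          Sum.elim (x - xbar k) (lam - lbar k) ⬝ᵥ
            Sum.elim (-(Aᵀ *ᵥ lbar k)) (A *ᵥ xbar k - b) ≥
        Sum.elim (x - xbar k) (lam - lbar k) ⬝ᵥ (H *ᵥ (w k - Sum.elim (xbar k) (lbar k))))
    (hdiff : Tendsto (fun k => w k - Sum.elim (xbar k) (lbar k)) atTop (nhds 0))
    (winf : Fin n ⊕ Fin m → ℝ) (φ : ℕ → ℕ) (hφ : StrictMono φ)
    (hsub : Tendsto (fun j => Sum.elim (xbar (φ j)) (lbar (φ j))) atTop (nhds winf)) :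
    (winf ∘ Sum.inl) ∈ X ∧
      ∀ x ∈ X, ∀ lam : Fin m → ℝ,
        θ x - θ (winf ∘ Sum.inl) +
          Sum.elim (x - winf ∘ Sum.inl) (lam - winf ∘ Sum.inr) ⬝ᵥ
            Sum.elim (-(Aᵀ *ᵥ (winf ∘ Sum.inr))) (A *ᵥ (winf ∘ Sum.inl) - b) ≥ 0 := by
  -- continuity of restriction maps
  have hcl : Continuous (fun u : (Fin n ⊕ Fin m) → ℝ => u ∘ Sum.inl) :=
    continuous_pi fun i => continuous_apply _
  have hcr : Continuous (fun u : (Fin n ⊕ Fin m) → ℝ => u ∘ Sum.inr) :=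
    continuous_pi fun i => continuous_apply _
  have hx : Tendsto (fun j => xbar (φ j)) atTop (nhds (winf ∘ Sum.inl)) := by
    have := ((hcl.tendsto winf).comp hsub)
    simpa [Function.comp_def] using this
  have hmem : (winf ∘ Sum.inl) ∈ X :=
    hXclosed.mem_of_tendsto hx (Eventually.of_forall fun j => hbarX (φ j))
  refine ⟨hmem, ?_⟩
  intro x hxX lam
  -- the difference sequence along the subsequence tends to 0
  have hd : Tendsto (fun j => w (φ j) - Sum.elim (xbar (φ j)) (lbar (φ j))) atTop (nhds 0) :=
    hdiff.comp (hφ.tendsto_atTop)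
  -- the full expression as a continuous function of (u, d)
  set L : ((Fin n ⊕ Fin m) → ℝ) × ((Fin n ⊕ Fin m) → ℝ) → ℝ := fun p =>
    θ x - θ (p.1 ∘ Sum.inl) +
      Sum.elim (x - p.1 ∘ Sum.inl) (lam - p.1 ∘ Sum.inr) ⬝ᵥ
        Sum.elim (-(Aᵀ *ᵥ (p.1 ∘ Sum.inr))) (A *ᵥ (p.1 ∘ Sum.inl) - b) -
      Sum.elim (x - p.1 ∘ Sum.inl) (lam - p.1 ∘ Sum.inr) ⬝ᵥ (H *ᵥ p.2) with hL
  have hcl1 : Continuous (fun p : ((Fin n ⊕ Fin m) → ℝ) × ((Fin n ⊕ Fin m) → ℝ) =>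
      p.1 ∘ Sum.inl) := hcl.comp continuous_fst
  have hcr1 : Continuous (fun p : ((Fin n ⊕ Fin m) → ℝ) × ((Fin n ⊕ Fin m) → ℝ) =>
      p.1 ∘ Sum.inr) := hcr.comp continuous_fst
  have helim : ∀ (f : ((Fin n ⊕ Fin m) → ℝ) × ((Fin n ⊕ Fin m) → ℝ) → Fin n → ℝ)
      (g : ((Fin n ⊕ Fin m) → ℝ) × ((Fin n ⊕ Fin m) → ℝ) → Fin m → ℝ),
      Continuous f → Continuous g →
      Continuous (fun p => Sum.elim (f p) (g p) : _ → (Fin n ⊕ Fin m) → ℝ) := by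
    intro f g hf hg
    refine continuous_pi fun i => ?_
    cases i with
    | inl i => simpa [Function.comp_def] using (continuous_apply i).comp hf
    | inr i => simpa [Function.comp_def] using (continuous_apply i).comp hg
  have hLc : Continuous L := by
    have h1 : Continuous (fun p : ((Fin n ⊕ Fin m) → ℝ) × ((Fin n ⊕ Fin m) → ℝ) =>
        Sum.elim (x - p.1 ∘ Sum.inl) (lam - p.1 ∘ Sum.inr)) :=
      helim _ _ (continuous_const.sub hcl1) (continuous_const.sub hcr1)
    have h2 : Continuous (fun p : ((Fin n ⊕ Fin m) → ℝ) × ((Fin n ⊕ Fin m) → ℝ) =>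
        Sum.elim (-(Aᵀ *ᵥ (p.1 ∘ Sum.inr))) (A *ᵥ (p.1 ∘ Sum.inl) - b)) :=
      helim _ _ ((continuous_const.matrix_mulVec hcr1).neg)
        ((continuous_const.matrix_mulVec hcl1).sub continuous_const)
    have h3 : Continuous (fun p : ((Fin n ⊕ Fin m) → ℝ) × ((Fin n ⊕ Fin m) → ℝ) =>
        H *ᵥ p.2) := continuous_const.matrix_mulVec continuous_snd
    exact ((continuous_const.sub (hθc.comp hcl1)).add (h1.dotProduct h2)).sub
      (h1.dotProduct h3)
  -- pairs tending to (winf, 0)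
  have hpair : Tendsto (fun j => (Sum.elim (xbar (φ j)) (lbar (φ j)),
      w (φ j) - Sum.elim (xbar (φ j)) (lbar (φ j)))) atTop (nhds (winf, 0)) :=
    hsub.prodMk_nhds hd
  have hlim : Tendsto (fun j => L (Sum.elim (xbar (φ j)) (lbar (φ j)),
      w (φ j) - Sum.elim (xbar (φ j)) (lbar (φ j)))) atTop (nhds (L (winf, 0))) :=
    (hLc.tendsto _).comp hpair
  have hnonneg : ∀ j, 0 ≤ L (Sum.elim (xbar (φ j)) (lbar (φ j)),
      w (φ j) - Sum.elim (xbar (φ j)) (lbar (φ j))) := by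
    intro j
    have := hpred (φ j) x hxX lam
    simp only [hL, Sum.elim_comp_inl, Sum.elim_comp_inr]
    linarith
  have hfinal : 0 ≤ L (winf, 0) := le_of_tendsto_of_tendsto' tendsto_const_nhds hlim hnonneg
  have : L (winf, 0) = θ x - θ (winf ∘ Sum.inl) +
      Sum.elim (x - winf ∘ Sum.inl) (lam - winf ∘ Sum.inr) ⬝ᵥ
        Sum.elim (-(Aᵀ *ᵥ (winf ∘ Sum.inr))) (A *ᵥ (winf ∘ Sum.inl) - b) := by
    simp [hL]
  linarith [hfinal, this.symm.le, this.le]
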